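/- If every placed component occupies an axis-aligned rectangle of grid cells and each such rectangle is surrounded by a full ring of active routers (i.e., the rectangle together with its unit-width boundary lies strictly inside the grid and boundary cells are not covered by any component), and distinct components' rectangles are disjoint, then the subgraph of the grid induced by the active (uncovered) routers is connected. -/

import Mathlib

/-- An axis-aligned rectangle `[a,b] × [c,d]` of grid cells. -/
structure Rect where
  a : ℤ
  b : ℤ
  c : ℤ
  d : ℤ
  hab : a ≤ b
  hcd : c ≤ d

/-- The set of cells covered by a rectangle. -/
def Rect.Mem (R : Rect) (p : ℤ × ℤ) : Prop :=
  R.a ≤ p.1 ∧ p.1 ≤ R.b ∧ R.c ≤ p.2 ∧ p.2 ≤ R.d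

/-- The one-cell-enlarged rectangle `[a-1,b+1] × [c-1,d+1]`. -/
def Rect.EnlMem (R : Rect) (p : ℤ × ℤ) : Prop :=
  R.a - 1 ≤ p.1 ∧ p.1 ≤ R.b + 1 ∧ R.c - 1 ≤ p.2 ∧ p.2 ≤ R.d + 1

/-- The n×m grid of routers, as the integer points `[0,n) × [0,m)`. -/
def Grid (n m : ℕ) : Set (ℤ × ℤ) :=
  {p | 0 ≤ p.1 ∧ p.1 < (n : ℤ) ∧ 0 ≤ p.2 ∧ p.2 < (m : ℤ)}

/-- Grid adjacency: differ by 1 in exactly one coordinate. -/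
def adj (u v : ℤ × ℤ) : Prop := (u.1 - v.1).natAbs + (u.2 - v.2).natAbs = 1

/-- Connectivity of the subgraph of the grid induced by a set `S`:
any two vertices of `S` are joined by a path staying in `S`. -/
def ConnOn (S : Set (ℤ × ℤ)) : Prop :=
  ∀ u ∈ S, ∀ v ∈ S,
    Relation.ReflTransGen (fun x y => adj x y ∧ x ∈ S ∧ y ∈ S) u v

/-- The set of active routers. -/
def ActiveSet (n m : ℕ) (P : Finset Rect) : Set (ℤ × ℤ) :=
  {p | p ∈ Grid n m ∧ ∀ R ∈ P, ¬ R.Mem p}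

private lemma adj_symm : ∀ u v : ℤ × ℤ, adj u v → adj v u := by
  intro u v h; unfold adj at *; omega

private lemma seg_h (S : Set (ℤ × ℤ)) (y x0 : ℤ) (k : ℕ)
    (hall : ∀ x, x0 ≤ x → x ≤ x0 + k → (x, y) ∈ S) :
    Relation.ReflTransGen (fun a b => adj a b ∧ a ∈ S ∧ b ∈ S) (x0 + (k : ℤ), y) (x0, y) := by
  induction k with
  | zero => simpa using Relation.ReflTransGen.refl
  | succ k ih =>
    refine Relation.ReflTransGen.head ⟨?_, ?_, ?_⟩
      (ih (fun x hx hx' => hall x hx (by push_cast; omega)))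
    · show adj (x0 + ((k : ℕ) + 1 : ℤ), y) (x0 + (k : ℤ), y)
      unfold adj; simp
    · exact hall _ (by push_cast; omega) (by push_cast; omega)
    · exact hall _ (by push_cast; omega) (by push_cast; omega)

private lemma seg_v (S : Set (ℤ × ℤ)) (x y0 : ℤ) (k : ℕ)
    (hall : ∀ y, y0 ≤ y → y ≤ y0 + k → (x, y) ∈ S) :
    Relation.ReflTransGen (fun a b => adj a b ∧ a ∈ S ∧ b ∈ S) (x, y0 + (k : ℤ)) (x, y0) := by
  induction k with
  | zero => simpa using Relation.ReflTransGen.refl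
  | succ k ih =>
    refine Relation.ReflTransGen.head ⟨?_, ?_, ?_⟩
      (ih (fun y hy hy' => hall y hy (by push_cast; omega)))
    · show adj (x, y0 + ((k : ℕ) + 1 : ℤ)) (x, y0 + (k : ℤ))
      unfold adj; simp
    · exact hall _ (by push_cast; omega) (by omega)
    · exact hall _ (by push_cast; omega) (by push_cast; omega)

private lemma seg_h' (S : Set (ℤ × ℤ)) (y x0 x1 : ℤ) (hle : x0 ≤ x1)
    (hall : ∀ x, x0 ≤ x → x ≤ x1 → (x, y) ∈ S) :
    Relation.ReflTransGen (fun a b => adj a b ∧ a ∈ S ∧ b ∈ S) (x1, y) (x0, y) := by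
  obtain ⟨k, rfl⟩ : ∃ k : ℕ, x1 = x0 + k := ⟨(x1 - x0).toNat, by omega⟩
  exact seg_h S y x0 k (fun x hx hx' => hall x hx hx')

private lemma seg_v' (S : Set (ℤ × ℤ)) (x y0 y1 : ℤ) (hle : y0 ≤ y1)
    (hall : ∀ y, y0 ≤ y → y ≤ y1 → (x, y) ∈ S) :
    Relation.ReflTransGen (fun a b => adj a b ∧ a ∈ S ∧ b ∈ S) (x, y1) (x, y0) := by
  obtain ⟨k, rfl⟩ : ∃ k : ℕ, y1 = y0 + k := ⟨(y1 - y0).toNat, by omega⟩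
  exact seg_v S x y0 k (fun y hy hy' => hall y hy hy')

private lemma ring_active (n m : ℕ) (P : Finset Rect)
    (hring : ∀ R ∈ P,
      (∀ p, R.EnlMem p → p ∈ Grid n m) ∧
      (∀ p, R.EnlMem p → ¬ R.Mem p → ∀ R' ∈ P, ¬ R'.Mem p))
    (R : Rect) (hR : R ∈ P) (p : ℤ × ℤ) (hEnl : R.EnlMem p) (hnot : ¬ R.Mem p) :
    p ∈ ActiveSet n m P :=
  ⟨(hring R hR).1 p hEnl, fun R' hR' => (hring R hR).2 p hEnl hnot R' hR'⟩

private lemma row0_active (n m : ℕ) (P : Finset Rect)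
    (hring : ∀ R ∈ P,
      (∀ p, R.EnlMem p → p ∈ Grid n m) ∧
      (∀ p, R.EnlMem p → ¬ R.Mem p → ∀ R' ∈ P, ¬ R'.Mem p))
    (hm : 0 < m) : ∀ x : ℤ, 0 ≤ x → x < (n : ℤ) → (x, (0:ℤ)) ∈ ActiveSet n m P := by
  intro x hx hxn
  refine ⟨⟨hx, hxn, le_refl 0, by show (0:ℤ) < m; exact_mod_cast hm⟩, ?_⟩
  intro R hR hmem
  have hab := R.hab
  have hcd := R.hcd
  have h1 := (hring R hR).1 (R.a - 1, R.c - 1)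
    ⟨by omega, by show R.a - 1 ≤ R.b + 1; omega, by omega, by show R.c - 1 ≤ R.d + 1; omega⟩
  obtain ⟨_, _, h2, _⟩ := h1
  obtain ⟨_, _, h3, _⟩ := hmem
  simp only at h2 h3
  omega

private lemma to_origin (n m : ℕ) (P : Finset Rect)
    (hring : ∀ R ∈ P,
      (∀ p, R.EnlMem p → p ∈ Grid n m) ∧
      (∀ p, R.EnlMem p → ¬ R.Mem p → ∀ R' ∈ P, ¬ R'.Mem p)) :
    ∀ k : ℕ, ∀ p : ℤ × ℤ, p ∈ ActiveSet n m P → p.2.toNat ≤ k →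
      Relation.ReflTransGen
        (fun a b => adj a b ∧ a ∈ ActiveSet n m P ∧ b ∈ ActiveSet n m P)
        p ((0:ℤ), (0:ℤ)) := by
  have row_case : ∀ p : ℤ × ℤ, p ∈ ActiveSet n m P → p.2 = 0 →
      Relation.ReflTransGen
        (fun a b => adj a b ∧ a ∈ ActiveSet n m P ∧ b ∈ ActiveSet n m P)
        p ((0:ℤ), (0:ℤ)) := by
    rintro ⟨px, py⟩ hp hy0
    simp only at hy0
    subst hy0
    obtain ⟨⟨hx0, hxn, -, hym⟩, -⟩ := hp
    simp only at hx0 hxn hym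
    exact seg_h' _ 0 0 px hx0 (fun x hx hx' =>
      row0_active n m P hring (by exact_mod_cast hym) x hx (by omega))
  intro k
  induction k with
  | zero =>
    rintro ⟨px, py⟩ hp hk
    refine row_case _ hp ?_
    have := hp.1.2.2.1
    simp only at this ⊢
    omega
  | succ k ih =>
    rintro ⟨px, py⟩ hp hk
    have hab : (0:ℤ) ≤ px ∧ px < n ∧ 0 ≤ py ∧ py < m := hp.1
    by_cases hy0 : py = 0
    · exact row_case _ hp (by simpa using hy0)
    · have hpy : 1 ≤ py := by omega
      by_cases hq : ∀ R ∈ P, ¬ R.Mem (px, py - 1)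
      · -- step straight down
        have hqS : (px, py - 1) ∈ ActiveSet n m P :=
          ⟨⟨hab.1, hab.2.1, by omega, by simp only; omega⟩, hq⟩
        refine Relation.ReflTransGen.head ⟨?_, hp, hqS⟩ (ih (px, py - 1) hqS ?_)
        · unfold adj; simp
        · simp only [Int.toNat_le] at hk ⊢; omega
      · -- blocked by a rectangle R; walk around its ring
        push_neg at hq
        obtain ⟨R, hR, hmem⟩ := hq
        obtain ⟨m1, m2, m3, m4⟩ := hmem
        simp only at m1 m2 m3 m4
        have hcd := R.hcd
        have hnotp : ¬ R.Mem (px, py) := hp.2 R hR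
        have hpyd : py = R.d + 1 := by
          rcases not_and_or.mp hnotp with h | h
          · exact absurd m1 h
          rcases not_and_or.mp h with h | h
          · exact absurd m2 h
          rcases not_and_or.mp h with h | h
          · simp only at h; omega
          · simp only at h; omega
        subst hpyd
        -- the corner point is in the grid, giving bounds on R.c
        have hcg := (hring R hR).1 (R.a - 1, R.c - 1)
          ⟨by omega, by show R.a - 1 ≤ R.b + 1; have := R.hab; omega,
           by omega, by show R.c - 1 ≤ R.d + 1; omega⟩
        obtain ⟨hc1, -, hc2, -⟩ := hcg
        simp only at hc1 hc2
        have p1 : Relation.ReflTransGen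
            (fun a b => adj a b ∧ a ∈ ActiveSet n m P ∧ b ∈ ActiveSet n m P)
            (px, R.d + 1) (R.a - 1, R.d + 1) :=
          seg_h' _ (R.d + 1) (R.a - 1) px (by omega) (fun x hx hx' =>
            ring_active n m P hring R hR (x, R.d + 1)
              ⟨hx, by simp only; omega, by simp only; omega, by simp only; omega⟩
              (fun h => by have := h.2.2.2; simp only at this; omega))
        have p2 : Relation.ReflTransGen
            (fun a b => adj a b ∧ a ∈ ActiveSet n m P ∧ b ∈ ActiveSet n m P)
            (R.a - 1, R.d + 1) (R.a - 1, R.c - 1) :=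
          seg_v' _ (R.a - 1) (R.c - 1) (R.d + 1) (by omega) (fun y hy hy' =>
            ring_active n m P hring R hR (R.a - 1, y)
              ⟨by simp only; omega, by simp only; have := R.hab; omega, hy, hy'⟩
              (fun h => by have := h.1; simp only at this; omega))
        have hcorner : (R.a - 1, R.c - 1) ∈ ActiveSet n m P :=
          ring_active n m P hring R hR (R.a - 1, R.c - 1)
            ⟨by simp only; omega, by simp only; have := R.hab; omega,
             by simp only; omega, by simp only; omega⟩
            (fun h => by have := h.1; simp only at this; omega)
        have p3 := ih (R.a - 1, R.c - 1) hcorner (by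
          simp only [Int.toNat_le] at hk ⊢; omega)
        exact p1.trans (p2.trans p3)

/-- If every placed component occupies a rectangle, distinct rectangles are
pairwise disjoint, and each rectangle together with its unit-width ring of
routers lies inside the grid with all ring cells uncovered, then the subgraph
induced by the active (uncovered) routers is connected. -/
theorem ring_condition_implies_connected (n m : ℕ) (P : Finset Rect)
    (hdisj : ∀ R ∈ P, ∀ R' ∈ P, R ≠ R' → ∀ p, ¬ (R.Mem p ∧ R'.Mem p))
    (hring : ∀ R ∈ P,
      (∀ p, R.EnlMem p → p ∈ Grid n m) ∧
      (∀ p, R.EnlMem p → ¬ R.Mem p → ∀ R' ∈ P, ¬ R'.Mem p)) :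
    ConnOn {p | p ∈ Grid n m ∧ ∀ R ∈ P, ¬ R.Mem p} := by
  intro u hu v hv
  have hsym : Symmetric (fun a b => adj a b ∧ a ∈ ActiveSet n m P ∧ b ∈ ActiveSet n m P) :=
    fun a b h => ⟨adj_symm a b h.1, h.2.2, h.2.1⟩
  have h1 := to_origin n m P hring u.2.toNat u hu le_rfl
  have h2 := to_origin n m P hring v.2.toNat v hv le_rfl
  haveI : Std.Symm (fun a b => adj a b ∧ a ∈ ActiveSet n m P ∧ b ∈ ActiveSet n m P) := ⟨hsym⟩
  exact h1.trans (Relation.ReflTransGen.symmetric.symm _ _ h2)
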